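/- arXiv:1212.1772 — 2 statements merged into one kernel-verified Lean document; each statement's English description precedes it below -/
import Mathlib

section
/- Let β ∈ (-1,1) and let g(t) = exp(∫₀^t (1+s)^(-β) ds) · ∫_t^∞ exp(-∫₀^τ (1+s)^(-β) ds) dτ. Then lim_{t→∞} (1+t)^(-β) g(t) = 1. -/
open Real MeasureTheory Filter Set

theorem stmt_5 (β : ℝ) (hβ : β ∈ Set.Ioo (-1 : ℝ) 1)
    (g : ℝ → ℝ)
    (hg : ∀ t : ℝ, g t = Real.exp (∫ s in (0:ℝ)..t, (1 + s) ^ (-β)) *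
        ∫ τ in Set.Ioi t, Real.exp (-∫ s in (0:ℝ)..τ, (1 + s) ^ (-β))) :
    Filter.Tendsto (fun t : ℝ => (1 + t) ^ (-β) * g t) Filter.atTop (nhds 1) := by
  obtain ⟨hβ1, hβ2⟩ := hβ
  have hc : (0:ℝ) < 1 - β := by linarith
  set E : ℝ → ℝ := fun τ => Real.exp (-(((1+τ)^(1-β) - 1)/(1-β))) with hEdef
  set G : ℝ → ℝ := fun x => -((1+x)^β * E x) with hGdef
  set G' : ℝ → ℝ := fun τ => E τ * (1 - β * (1+τ)^(β-1)) with hG'def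
  -- formula for the interval integral
  have hF : ∀ t : ℝ, (∫ s in (0:ℝ)..t, (1 + s) ^ (-β)) = ((1+t)^(1-β) - 1)/(1-β) := by
    intro t
    have h1 : (∫ s in (0:ℝ)..t, (1 + s) ^ (-β)) = ∫ s in (1:ℝ)..(1+t), s ^ (-β) := by
      simpa using intervalIntegral.integral_comp_add_left (a := 0) (b := t)
        (fun s => s ^ (-β)) 1
    rw [h1, integral_rpow (Or.inl (by linarith : (-1:ℝ) < -β)), Real.one_rpow,
      show -β + 1 = 1 - β by ring]
  -- continuity of E
  have hEcont : Continuous E := by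
    apply Real.continuous_exp.comp
    exact ((((continuous_const.add continuous_id).rpow_const
      (fun x => Or.inr hc.le)).sub continuous_const).div_const _).neg
  -- derivative of G
  have hderiv : ∀ τ : ℝ, 0 < 1 + τ → HasDerivAt G (G' τ) τ := by
    intro τ hτ
    have h1 : HasDerivAt (fun x : ℝ => 1 + x) 1 τ := (hasDerivAt_id τ).const_add 1
    have h2 : HasDerivAt (fun x : ℝ => (1+x)^β) (1 * β * (1+τ)^(β-1)) τ :=
      h1.rpow_const (Or.inl hτ.ne')
    have h3 : HasDerivAt (fun x : ℝ => (1+x)^(1-β)) (1 * (1-β) * (1+τ)^(1-β-1)) τ :=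
      h1.rpow_const (Or.inl hτ.ne')
    have h4 : HasDerivAt (fun x : ℝ => -(((1+x)^(1-β) - 1)/(1-β)))
        (-((1+τ)^(-β))) τ := by
      have := ((h3.sub_const 1).div_const (1-β)).fun_neg
      refine this.congr_deriv ?_
      rw [show 1-β-1 = -β by ring]
      field_simp
    have h5 := h4.exp
    have h6 := (h2.fun_mul h5).fun_neg
    refine h6.congr_deriv ?_
    have hmul : (1+τ)^β * (1+τ)^(-β) = 1 := by
      rw [← Real.rpow_add hτ]; simp
    have hkey : (1+τ)^β * ((1+τ)^(-β) * Real.exp (-(((1+τ)^(1-β) - 1)/(1-β)))) =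
        Real.exp (-(((1+τ)^(1-β) - 1)/(1-β))) := by
      rw [← mul_assoc, hmul, one_mul]
    simp only [hG'def, hEdef]
    ring_nf
    ring_nf at hkey ⊢
    nlinarith [hkey]
  -- limit of G at infinity
  have hGtend : Tendsto G atTop (nhds 0) := by
    have hadd : Tendsto (fun x : ℝ => 1 + x) atTop atTop :=
      tendsto_atTop_add_const_left _ 1 tendsto_id
    have hu : Tendsto (fun x : ℝ => (1+x)^(1-β)) atTop atTop :=
      (tendsto_rpow_atTop hc).comp hadd
    have hmain : Tendsto (fun v : ℝ => v ^ (β/(1-β)) * Real.exp (-(1-β)⁻¹ * v))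
        atTop (nhds 0) :=
      tendsto_rpow_mul_exp_neg_mul_atTop_nhds_zero _ _ (inv_pos.mpr hc)
    have h2 : Tendsto (fun x : ℝ =>
        Real.exp ((1-β)⁻¹) * (((1+x)^(1-β)) ^ (β/(1-β)) *
          Real.exp (-(1-β)⁻¹ * (1+x)^(1-β)))) atTop (nhds (Real.exp ((1-β)⁻¹) * 0)) :=
      ((hmain.comp hu).const_mul _ : _)
    rw [mul_zero] at h2
    have h3 := h2.neg
    rw [neg_zero] at h3
    apply h3.congr'
    filter_upwards [eventually_gt_atTop (0:ℝ)] with x hx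
    have hpos : (0:ℝ) < 1 + x := by linarith
    have hb : ((1+x)^(1-β)) ^ (β/(1-β)) = (1+x)^β := by
      rw [← Real.rpow_mul hpos.le]
      congr 1
      field_simp
    have he : Real.exp ((1-β)⁻¹) * Real.exp (-(1-β)⁻¹ * (1+x)^(1-β)) =
        Real.exp (-(((1+x)^(1-β) - 1)/(1-β))) := by
      rw [← Real.exp_add]
      congr 1
      field_simp
      ring
    show _ = G x
    simp only [hGdef, hEdef]
    rw [neg_inj]
    calc Real.exp ((1-β)⁻¹) * (((1+x)^(1-β)) ^ (β/(1-β)) *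
          Real.exp (-(1-β)⁻¹ * (1+x)^(1-β)))
        = (1+x)^β * (Real.exp ((1-β)⁻¹) * Real.exp (-(1-β)⁻¹ * (1+x)^(1-β))) := by
          rw [hb]; ring
      _ = (1+x)^β * Real.exp (-(((1+x)^(1-β) - 1)/(1-β))) := by rw [he]
  -- the small quantity ε(t)
  have hε : Tendsto (fun t : ℝ => |β| * (1+t)^(β-1)) atTop (nhds 0) := by
    have h0 : Tendsto (fun t : ℝ => (1+t)^(-(1-β))) atTop (nhds 0) :=
      (tendsto_rpow_neg_atTop hc).comp (tendsto_atTop_add_const_left _ 1 tendsto_id)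
    have h1 := h0.const_mul |β|
    rw [mul_zero] at h1
    exact h1.congr (fun t => by rw [show -(1-β) = β - 1 from by ring])
  have lower_to : Tendsto (fun t : ℝ => (1 + |β| * (1+t)^(β-1))⁻¹) atTop (nhds 1) := by
    have h1 := hε.const_add 1
    rw [add_zero] at h1
    simpa using h1.inv₀ (by norm_num)
  have upper_to : Tendsto (fun t : ℝ => (1 - |β| * (1+t)^(β-1))⁻¹) atTop (nhds 1) := by
    have h1 := hε.const_sub 1
    rw [sub_zero] at h1
    simpa using h1.inv₀ (by norm_num)
  have key : ∀ᶠ t in atTop, (1 + |β| * (1+t)^(β-1))⁻¹ ≤ (1+t)^(-β) * g t ∧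
      (1+t)^(-β) * g t ≤ (1 - |β| * (1+t)^(β-1))⁻¹ := by
    filter_upwards [hε.eventually_le_const (by norm_num : (0:ℝ) < 1/2),
      eventually_ge_atTop (0:ℝ)] with t hεhalf ht0
    have htpos : (0:ℝ) < 1 + t := by linarith
    set ε : ℝ := |β| * (1+t)^(β-1) with hεdef
    have hεnn : 0 ≤ ε := by rw [hεdef]; positivity
    have hb : ∀ τ ∈ Ioi t, |β * (1+τ)^(β-1)| ≤ ε := by
      intro τ hτ
      have hlt : t < τ := hτ
      have hτpos : (0:ℝ) < 1 + τ := by linarith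
      rw [abs_mul, abs_of_nonneg (Real.rpow_nonneg hτpos.le _)]
      exact mul_le_mul_of_nonneg_left
        (Real.rpow_le_rpow_of_nonpos htpos (by linarith) (by linarith)) (abs_nonneg β)
    have hderivIci : ∀ x ∈ Ici t, HasDerivAt G (G' x) x := fun x hx =>
      hderiv x (by have : t ≤ x := hx; linarith)
    have hpos' : ∀ τ ∈ Ioi t, 0 ≤ G' τ := by
      intro τ hτ
      have h1 := abs_le.mp (hb τ hτ)
      have h2 : (0:ℝ) < E τ := Real.exp_pos _
      have h3 : (0:ℝ) ≤ 1 - β * (1+τ)^(β-1) := by linarith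
      exact mul_nonneg h2.le h3
    have hint : IntegrableOn G' (Ioi t) :=
      integrableOn_Ioi_deriv_of_nonneg' hderivIci hpos' hGtend
    have hIeq : ∫ τ in Ioi t, G' τ = (1+t)^β * E t := by
      rw [integral_Ioi_of_hasDerivAt_of_nonneg' hderivIci hpos' hGtend]
      simp [hGdef]
    have hEint : IntegrableOn E (Ioi t) := by
      apply Integrable.mono' (hint.const_mul 2) hEcont.aestronglyMeasurable
      rw [ae_restrict_iff' measurableSet_Ioi]
      refine ae_of_all _ fun τ hτ => ?_
      have h1 := abs_le.mp (hb τ hτ)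
      have h2 : (0:ℝ) < E τ := Real.exp_pos _
      rw [Real.norm_eq_abs, abs_of_pos h2]
      simp only [hG'def]
      nlinarith
    have hlow : (1-ε) * (∫ τ in Ioi t, E τ) ≤ (1+t)^β * E t := by
      rw [← hIeq, ← integral_const_mul]
      refine setIntegral_mono_on (hEint.const_mul _) hint measurableSet_Ioi fun τ hτ => ?_
      have h1 := abs_le.mp (hb τ hτ)
      have h2 : (0:ℝ) < E τ := Real.exp_pos _
      simp only [hG'def]
      nlinarith
    have hup : (1+t)^β * E t ≤ (1+ε) * (∫ τ in Ioi t, E τ) := by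
      rw [← hIeq, ← integral_const_mul]
      refine setIntegral_mono_on hint (hEint.const_mul _) measurableSet_Ioi fun τ hτ => ?_
      have h1 := abs_le.mp (hb τ hτ)
      have h2 : (0:ℝ) < E τ := Real.exp_pos _
      simp only [hG'def]
      nlinarith
    have hEt : 0 < E t := Real.exp_pos _
    have hP : 0 < (1+t)^β := Real.rpow_pos_of_pos htpos β
    have hgt : g t = (E t)⁻¹ * ∫ τ in Ioi t, E τ := by
      rw [hg t, hF t]
      congr 1
      · simp [hEdef, Real.exp_neg]
      · refine setIntegral_congr_fun measurableSet_Ioi fun τ _ => ?_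
        rw [hF τ]
    have h1ε : (0:ℝ) < 1 + ε := by linarith
    have h2ε : (0:ℝ) < 1 - ε := by linarith
    have hre : (1+t)^(-β) * g t = (∫ τ in Ioi t, E τ) / ((1+t)^β * E t) := by
      rw [hgt, Real.rpow_neg htpos.le, div_eq_mul_inv, mul_inv]
      ring
    constructor
    · rw [hre, le_div_iff₀ (by positivity)]
      have h := mul_le_mul_of_nonneg_left hup (inv_pos.mpr h1ε).le
      have h2 : (1+ε)⁻¹ * ((1+ε) * ∫ τ in Ioi t, E τ) = ∫ τ in Ioi t, E τ := by
        field_simp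
      linarith [h, h2]
    · rw [hre, div_le_iff₀ (by positivity)]
      have h := mul_le_mul_of_nonneg_left hlow (inv_pos.mpr h2ε).le
      have h2 : (1-ε)⁻¹ * ((1-ε) * ∫ τ in Ioi t, E τ) = ∫ τ in Ioi t, E τ := by
        field_simp
      linarith [h, h2]
  exact tendsto_of_tendsto_of_tendsto_of_le_of_le'
    lower_to upper_to (key.mono fun t h => h.1) (key.mono fun t h => h.2)
end

section
/- Let β ∈ (-1,1) and let g be the solution of -g'(t) + (1+t)^(-β) g(t) = 1 with g(0) = B^(-1) as above. Then there exist constants c₁, c₂ > 0 such that c₁ (1+t)^β ≤ g(t) ≤ c₂ (1+t)^β for all t ≥ 0, and |g'(t)| is bounded on [0,∞). -/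
open Real MeasureTheory Set Filter Topology

namespace Stmt6Aux

noncomputable def F (β t : ℝ) : ℝ := ((1 + t) ^ (1 - β) - 1) / (1 - β)
noncomputable def E (β τ : ℝ) : ℝ := Real.exp (-(F β τ))
noncomputable def H (β τ : ℝ) : ℝ := (1 + τ) ^ β * E β τ

variable {β : ℝ}

lemma expF_mul_E (t : ℝ) : Real.exp (F β t) * E β t = 1 := by
  rw [E, ← Real.exp_add, add_neg_cancel, Real.exp_zero]

lemma intF (hb2 : β < 1) {t : ℝ} (ht : -1 < t) :
    ∫ s in (0:ℝ)..t, (1 + s) ^ (-β) = F β t := by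
  have h1 : ∫ s in (0:ℝ)..t, (1 + s) ^ (-β)
      = ∫ u in (1+0:ℝ)..(1+t), u ^ (-β) :=
    intervalIntegral.integral_comp_add_left (fun u => u ^ (-β)) 1
  rw [h1, integral_rpow (Or.inl (by linarith))]
  norm_num [F]
  rw [show -β + 1 = 1 - β by ring]

lemma contE (hb2 : β < 1) : Continuous (E β) := by
  have h1 : Continuous fun x : ℝ => x ^ (1 - β) := by
    rw [continuous_iff_continuousAt]
    intro x
    exact Real.continuousAt_rpow_const x _ (Or.inr (by linarith))
  exact Real.continuous_exp.comp
    ((((h1.comp (continuous_const.add continuous_id)).sub continuous_const).div_const _).neg)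

lemma hasDerivAtF (hb2 : β < 1) {t : ℝ} (ht : -1 < t) :
    HasDerivAt (F β) ((1 + t) ^ (-β)) t := by
  have h1 : HasDerivAt (fun t : ℝ => 1 + t) 1 t := (hasDerivAt_id t).const_add 1
  have h2 : HasDerivAt (fun t : ℝ => (1 + t) ^ (1 - β))
      (1 * (1 - β) * (1 + t) ^ (1 - β - 1)) t :=
    h1.rpow_const (Or.inl (by linarith))
  have h3 := (h2.sub_const 1).div_const (1 - β)
  refine h3.congr_deriv (Eq.symm ?_)
  rw [show (1 : ℝ) - β - 1 = -β by ring, one_mul, mul_comm, mul_div_assoc,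
    div_self (by linarith : (1:ℝ) - β ≠ 0), mul_one]

lemma hasDerivAtE (hb2 : β < 1) {t : ℝ} (ht : -1 < t) :
    HasDerivAt (E β) (-((1 + t) ^ (-β) * E β t)) t := by
  have := ((hasDerivAtF hb2 ht).neg).exp
  exact this.congr_deriv (by simp only [E, Pi.neg_apply]; ring)

lemma hasDerivAtH (hb2 : β < 1) {t : ℝ} (ht : -1 < t) :
    HasDerivAt (H β) ((β * (1 + t) ^ (β - 1) - 1) * E β t) t := by
  have h1 : HasDerivAt (fun t : ℝ => 1 + t) 1 t := (hasDerivAt_id t).const_add 1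
  have h2 : HasDerivAt (fun t : ℝ => (1 + t) ^ β) (1 * β * (1 + t) ^ (β - 1)) t :=
    h1.rpow_const (Or.inl (by linarith))
  have h3 := h2.mul (hasDerivAtE hb2 ht)
  have h4 : HasDerivAt (fun τ : ℝ => (1 + τ) ^ β * E β τ)
      ((β * (1 + t) ^ (β - 1) - 1) * E β t) t := by
    refine h3.congr_deriv (Eq.symm ?_)
    have hpow : (1 + t) ^ β * (1 + t) ^ (-β) = 1 := by
      rw [← Real.rpow_add (by linarith), add_neg_cancel, Real.rpow_zero]
    rw [mul_neg, ← mul_assoc, hpow, one_mul]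
    ring
  exact h4

lemma tendstoH (hb1 : -1 < β) (hb2 : β < 1) : Tendsto (H β) atTop (𝓝 0) := by
  have hp : (0:ℝ) < 1 - β := by linarith
  have key : Tendsto (fun u : ℝ => u ^ β * Real.exp (-(u ^ (1 - β)) / (1 - β)))
      atTop (𝓝 0) := by
    have h1 := (tendsto_rpow_mul_exp_neg_mul_atTop_nhds_zero (β / (1 - β)) (1/(1-β))
      (by positivity)).comp (tendsto_rpow_atTop hp)
    apply h1.congr'
    filter_upwards [eventually_gt_atTop (0:ℝ)] with u hu
    have h2 : (u ^ (1 - β)) ^ (β / (1 - β)) = u ^ β := by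
      rw [← Real.rpow_mul hu.le]
      congr 1
      field_simp
    simp only [Function.comp_apply]
    rw [h2]
    congr 1
    ring
  have comp1 : Tendsto (fun τ : ℝ => 1 + τ) atTop atTop :=
    tendsto_atTop_add_const_left atTop 1 tendsto_id
  have h3 := (key.comp comp1).const_mul (Real.exp (1/(1-β)))
  rw [mul_zero] at h3
  apply h3.congr
  intro τ
  simp only [Function.comp_apply, H, E, F]
  rw [← mul_assoc, mul_comm (Real.exp (1/(1-β))), mul_assoc, ← Real.exp_add]
  congr 2
  ring

end Stmt6Aux

namespace Stmt6Aux

lemma pointwise (hb1 : -1 < β) (hb2 : β < 1) {τ : ℝ} (hτ : 0 ≤ τ) :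
    (1 - |β|) * E β τ ≤ -((β * (1 + τ) ^ (β - 1) - 1) * E β τ) ∧
      -((β * (1 + τ) ^ (β - 1) - 1) * E β τ) ≤ (1 + |β|) * E β τ := by
  have hE : 0 ≤ E β τ := (Real.exp_pos _).le
  have hx1 : (1 + τ) ^ (β - 1) ≤ 1 :=
    Real.rpow_le_one_of_one_le_of_nonpos (by linarith) (by linarith)
  have hx0 : 0 ≤ (1 + τ) ^ (β - 1) := Real.rpow_nonneg (by linarith) _
  have habs : |β * (1 + τ) ^ (β - 1)| ≤ |β| := by
    rw [abs_mul]
    calc |β| * |(1 + τ) ^ (β - 1)| ≤ |β| * 1 := by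
          gcongr
          rw [abs_of_nonneg hx0]; exact hx1
      _ = |β| := mul_one _
  obtain ⟨hl, hr⟩ := abs_le.mp habs
  constructor
  · nlinarith [neg_abs_le β, le_abs_self β]
  · nlinarith [neg_abs_le β, le_abs_self β]

lemma Hderiv_nonpos (hb1 : -1 < β) (hb2 : β < 1) {τ : ℝ} (hτ : 0 ≤ τ) :
    (β * (1 + τ) ^ (β - 1) - 1) * E β τ ≤ 0 := by
  have habs : |β| < 1 := abs_lt.mpr ⟨hb1, hb2⟩
  have hE : 0 ≤ E β τ := (Real.exp_pos _).le
  have := (pointwise hb1 hb2 hτ).1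
  nlinarith

lemma integrableHD (hb1 : -1 < β) (hb2 : β < 1) {a : ℝ} (ha : 0 ≤ a) :
    IntegrableOn (fun τ => (β * (1 + τ) ^ (β - 1) - 1) * E β τ) (Ioi a) :=
  integrableOn_Ioi_deriv_of_nonpos
    ((hasDerivAtH hb2 (by linarith : (-1:ℝ) < a)).continuousAt.continuousWithinAt)
    (fun x hx => hasDerivAtH hb2 (by have := mem_Ioi.mp hx; linarith))
    (fun x hx => Hderiv_nonpos hb1 hb2 (by have := mem_Ioi.mp hx; linarith))
    (tendstoH hb1 hb2)

lemma integralHD (hb1 : -1 < β) (hb2 : β < 1) {a : ℝ} (ha : 0 ≤ a) :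
    ∫ τ in Ioi a, (β * (1 + τ) ^ (β - 1) - 1) * E β τ = -(H β a) := by
  rw [integral_Ioi_of_hasDerivAt_of_nonpos
    ((hasDerivAtH hb2 (by linarith : (-1:ℝ) < a)).continuousAt.continuousWithinAt)
    (fun x hx => hasDerivAtH hb2 (by have := mem_Ioi.mp hx; linarith))
    (fun x hx => Hderiv_nonpos hb1 hb2 (by have := mem_Ioi.mp hx; linarith))
    (tendstoH hb1 hb2), zero_sub]

lemma integrableE (hb1 : -1 < β) (hb2 : β < 1) {a : ℝ} (ha : -1 < a) :
    IntegrableOn (E β) (Ioi a) := by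
  have habs : |β| < 1 := abs_lt.mpr ⟨hb1, hb2⟩
  have I0 : IntegrableOn (E β) (Ioi 0) := by
    have hint := ((integrableHD hb1 hb2 le_rfl).neg).const_mul (1 - |β|)⁻¹
    refine Integrable.mono' hint (contE hb2).aestronglyMeasurable ?_
    filter_upwards [ae_restrict_mem measurableSet_Ioi] with τ hτ
    have hτ0 : (0:ℝ) ≤ τ := (mem_Ioi.mp hτ).le
    have hE : 0 ≤ E β τ := (Real.exp_pos _).le
    have h5 := (pointwise hb1 hb2 hτ0).1
    rw [Real.norm_eq_abs, abs_of_nonneg hE]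
    calc E β τ = (1 - |β|)⁻¹ * ((1 - |β|) * E β τ) := by
          rw [← mul_assoc, inv_mul_cancel₀ (by linarith), one_mul]
      _ ≤ (1 - |β|)⁻¹ * -((β * (1 + τ) ^ (β - 1) - 1) * E β τ) := by
          have h6 : (0:ℝ) < 1 - |β| := by linarith
          exact mul_le_mul_of_nonneg_left h5 (by positivity)
  rcases le_or_gt a 0 with h | h
  · rw [← Ioc_union_Ioi_eq_Ioi h]
    exact ((contE hb2).integrableOn_Ioc).union I0
  · exact I0.mono_set (Ioi_subset_Ioi h.le)

lemma G_bounds (hb1 : -1 < β) (hb2 : β < 1) {t : ℝ} (ht : 0 ≤ t) :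
    (1 - |β|) * ∫ τ in Ioi t, E β τ ≤ H β t ∧
      H β t ≤ (1 + |β|) * ∫ τ in Ioi t, E β τ := by
  have hIE := integrableE hb1 hb2 (by linarith : (-1:ℝ) < t)
  have hIHD := (integrableHD hb1 hb2 ht).neg
  have hH : H β t = ∫ τ in Ioi t, -((β * (1 + τ) ^ (β - 1) - 1) * E β τ) := by
    rw [integral_neg, integralHD hb1 hb2 ht, neg_neg]
  constructor
  · rw [hH, ← integral_const_mul]
    refine setIntegral_mono_on (hIE.const_mul _) hIHD measurableSet_Ioi ?_
    intro τ hτ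
    exact (pointwise hb1 hb2 (le_trans ht (mem_Ioi.mp hτ).le)).1
  · rw [hH, ← integral_const_mul]
    refine setIntegral_mono_on hIHD (hIE.const_mul _) measurableSet_Ioi ?_
    intro τ hτ
    exact (pointwise hb1 hb2 (le_trans ht (mem_Ioi.mp hτ).le)).2

lemma Gsplit (hb1 : -1 < β) (hb2 : β < 1) {t : ℝ} (ht : -1 < t) :
    ∫ τ in Ioi t, E β τ = (∫ τ in Ioi 0, E β τ) - ∫ s in (0:ℝ)..t, E β s := by
  rcases le_total 0 t with h | h
  · rw [intervalIntegral.integral_of_le h, ← Ioc_union_Ioi_eq_Ioi h,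
      setIntegral_union (Ioc_disjoint_Ioi le_rfl) measurableSet_Ioi
        (contE hb2).integrableOn_Ioc (integrableE hb1 hb2 (by linarith))]
    ring
  · rw [intervalIntegral.integral_of_ge h, ← Ioc_union_Ioi_eq_Ioi h,
      setIntegral_union (Ioc_disjoint_Ioi le_rfl) measurableSet_Ioi
        (contE hb2).integrableOn_Ioc (integrableE hb1 hb2 (by norm_num))]
    ring

end Stmt6Aux

open Stmt6Aux

theorem stmt_6 (β : ℝ) (hβ : β ∈ Set.Ioo (-1 : ℝ) 1)
    (g : ℝ → ℝ)
    (hg : ∀ t : ℝ, g t = Real.exp (∫ s in (0:ℝ)..t, (1 + s) ^ (-β)) *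
        ∫ τ in Set.Ioi t, Real.exp (-∫ s in (0:ℝ)..τ, (1 + s) ^ (-β))) :
    (∃ c₁ > (0:ℝ), ∃ c₂ > (0:ℝ), ∀ t : ℝ, 0 ≤ t →
        c₁ * (1 + t) ^ β ≤ g t ∧ g t ≤ c₂ * (1 + t) ^ β) ∧
    ∃ M : ℝ, ∀ t : ℝ, 0 ≤ t → |deriv g t| ≤ M := by
  obtain ⟨hb1, hb2⟩ := hβ
  have habs : |β| < 1 := abs_lt.mpr ⟨hb1, hb2⟩
  have habs0 : (0:ℝ) ≤ |β| := abs_nonneg _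
  have hgF : ∀ t : ℝ, -1 < t → g t = Real.exp (F β t) * ∫ τ in Ioi t, E β τ := by
    intro t ht
    rw [hg t, intF hb2 ht]
    congr 1
    refine setIntegral_congr_fun measurableSet_Ioi fun τ hτ => ?_
    rw [intF hb2 (by have := mem_Ioi.mp hτ; linarith)]
    rfl
  set c₁ : ℝ := (1 + |β|)⁻¹ with hc₁def
  set c₂ : ℝ := (1 - |β|)⁻¹ with hc₂def
  have hc₁ : 0 < c₁ := by rw [hc₁def]; positivity
  have hc₂ : 0 < c₂ := by rw [hc₂def]; have : (0:ℝ) < 1 - |β| := by linarith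
                          positivity
  have hbound : ∀ t : ℝ, 0 ≤ t → c₁ * (1 + t) ^ β ≤ g t ∧ g t ≤ c₂ * (1 + t) ^ β := by
    intro t ht
    obtain ⟨hG1, hG2⟩ := G_bounds hb1 hb2 ht
    have hEF : Real.exp (F β t) * H β t = (1 + t) ^ β := by
      rw [H, ← mul_assoc, mul_comm (Real.exp _), mul_assoc, expF_mul_E, mul_one]
    have hexp : (0:ℝ) < Real.exp (F β t) := Real.exp_pos _
    rw [hgF t (by linarith)]
    constructor
    · rw [← hEF]
      calc c₁ * (Real.exp (F β t) * H β t)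
          ≤ c₁ * (Real.exp (F β t) * ((1 + |β|) * ∫ τ in Ioi t, E β τ)) := by gcongr
        _ = Real.exp (F β t) * ∫ τ in Ioi t, E β τ := by
            rw [hc₁def, ← mul_assoc, ← mul_assoc]
            rw [mul_comm ((1+|β|)⁻¹) (Real.exp (F β t)), mul_assoc, mul_assoc,
              ← mul_assoc ((1+|β|)⁻¹), inv_mul_cancel₀ (by linarith), one_mul]
    · rw [← hEF]
      calc Real.exp (F β t) * ∫ τ in Ioi t, E β τ
          = c₂ * (Real.exp (F β t) * ((1 - |β|) * ∫ τ in Ioi t, E β τ)) := by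
            rw [hc₂def, ← mul_assoc, ← mul_assoc]
            rw [mul_comm ((1-|β|)⁻¹) (Real.exp (F β t)), mul_assoc, mul_assoc,
              ← mul_assoc ((1-|β|)⁻¹), inv_mul_cancel₀ (by linarith), one_mul]
        _ ≤ c₂ * (Real.exp (F β t) * H β t) := by gcongr
  refine ⟨⟨c₁, hc₁, c₂, hc₂, hbound⟩, c₂ + 1, fun t ht => ?_⟩
  have h1t : (0:ℝ) < 1 + t := by linarith
  have hderiv : HasDerivAt g ((1 + t) ^ (-β) * g t - 1) t := by
    have heq : ∀ᶠ x in 𝓝 t, g x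
        = Real.exp (F β x) * ((∫ τ in Ioi 0, E β τ) - ∫ s in (0:ℝ)..x, E β s) := by
      filter_upwards [eventually_gt_nhds (show -(1/2 : ℝ) < t by linarith)] with x hx
      rw [hgF x (by linarith), Gsplit hb1 hb2 (by linarith)]
    have hF := hasDerivAtF hb2 (by linarith : (-1:ℝ) < t)
    have hI : HasDerivAt (fun x => ∫ s in (0:ℝ)..x, E β s) (E β t) t :=
      intervalIntegral.integral_hasDerivAt_right
        ((contE hb2).intervalIntegrable _ _)
        ((contE hb2).stronglyMeasurable.stronglyMeasurableAtFilter)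
        (contE hb2).continuousAt
    have hprod := hF.exp.mul ((hasDerivAt_const t (∫ τ in Ioi 0, E β τ)).sub hI)
    have hgt : g t = Real.exp (F β t) * ((∫ τ in Ioi 0, E β τ) - ∫ s in (0:ℝ)..t, E β s) :=
      heq.self_of_nhds
    have hres := hprod.congr_of_eventuallyEq heq
    refine hres.congr_deriv (Eq.symm ?_)
    simp only [Pi.sub_apply]
    rw [hgt]
    have h1 : Real.exp (F β t) * E β t = 1 := expF_mul_E t
    rw [zero_sub, mul_neg, h1]
    ring
  rw [hderiv.deriv]
  have hg0 : 0 ≤ g t := le_trans (by positivity) (hbound t ht).1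
  have hpownn : (0:ℝ) ≤ (1 + t) ^ (-β) := Real.rpow_nonneg h1t.le _
  have hup : (1 + t) ^ (-β) * g t ≤ c₂ := by
    calc (1 + t) ^ (-β) * g t ≤ (1 + t) ^ (-β) * (c₂ * (1 + t) ^ β) := by
          gcongr
          exact (hbound t ht).2
      _ = c₂ := by
          rw [← mul_assoc, mul_comm _ c₂, mul_assoc, ← Real.rpow_add h1t,
            neg_add_cancel, Real.rpow_zero, mul_one]
  have hlo : 0 ≤ (1 + t) ^ (-β) * g t := mul_nonneg hpownn hg0
  rw [abs_le]
  constructor <;> nlinarith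
end
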